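/- arXiv:1309.5713 — 4 statements merged into one kernel-verified Lean document; each statement's English description precedes it below -/
import Mathlib

section
/- Let τ be a triangle function on Δ⁺ and Σ a ring of sets. A set function γ: Σ → Δ⁺ with γ_∅ = ε₀ satisfies γ_{E∪F} = τ(γ_E, γ_F) for all disjoint E, F ∈ Σ if and only if τ(γ_{E∪F}, γ_{E∩F}) = τ(γ_E, γ_F) for all E, F ∈ Σ. -/
open MeasureTheory Filter Set Topology

noncomputable section

/-- The distribution function of the Dirac measure at 0. -/
def eps0 : ℝ → ℝ := fun x => if 0 < x then 1 else 0

/-- εₐ : the distribution function of the Dirac measure at `a`. -/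
def epsAt (a : ℝ) : ℝ → ℝ := fun x => if a < x then 1 else 0

/-- Distance distribution function: non-decreasing, left-continuous,
vanishing on `(-∞,0]`, with values in `[0,1]` and `sup F = 1`. -/
def IsDDF (F : ℝ → ℝ) : Prop :=
  Monotone F ∧ (∀ x : ℝ, ContinuousWithinAt F (Set.Iio x) x) ∧
  (∀ x ≤ (0:ℝ), F x = 0) ∧ (∀ x, 0 ≤ F x ∧ F x ≤ 1) ∧
  Tendsto F atTop (nhds 1)

/-- Triangle function on Δ⁺: maps Δ⁺ × Δ⁺ into Δ⁺, symmetric, associative,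
non-decreasing in each variable, with ε₀ as identity. -/
def IsTriangleFn (τ : (ℝ → ℝ) → (ℝ → ℝ) → (ℝ → ℝ)) : Prop :=
  (∀ G H, IsDDF G → IsDDF H → IsDDF (τ G H)) ∧
  (∀ G H, τ G H = τ H G) ∧
  (∀ F G H, τ (τ F G) H = τ F (τ G H)) ∧
  (∀ F G H : ℝ → ℝ, F ≤ G → τ F H ≤ τ G H) ∧
  (∀ G, IsDDF G → τ G eps0 = G)

/-- Scalar multiplication `c ⊙ G` on Δ⁺. -/
def smulDDF (c : ℝ) (G : ℝ → ℝ) : ℝ → ℝ := fun x => if c = 0 then eps0 x else G (x / c)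

/-- Distributive triangle function: `c ⊙ τ(G,H) = τ(c ⊙ G, c ⊙ H)`. -/
def IsDistributive (τ : (ℝ → ℝ) → (ℝ → ℝ) → (ℝ → ℝ)) : Prop :=
  ∀ c : ℝ, 0 ≤ c → ∀ G H, smulDDF c (τ G H) = τ (smulDDF c G) (smulDDF c H)

/-- The Sibley (modified Lévy) metric on Δ⁺. -/
def dS (G H : ℝ → ℝ) : ℝ :=
  sInf {h : ℝ | 0 < h ∧ ∀ x ∈ Set.Icc (0:ℝ) (1/h),
    G (x - h) - h ≤ H x ∧ H x ≤ G (x + h) + h}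

/-- Iterated τ-sum `⊕_{i} G i` over `Fin n` (empty sum is `ε₀`). -/
def oplus (τ : (ℝ → ℝ) → (ℝ → ℝ) → (ℝ → ℝ)) : ∀ {n : ℕ}, (Fin n → (ℝ → ℝ)) → (ℝ → ℝ)
  | 0, _ => eps0
  | _ + 1, G => τ (G 0) (oplus τ (fun i => G i.succ))

/-- Partial sums `⊕_{k=0}^{n} G k` of a sequence. -/
def oplusPartial (τ : (ℝ → ℝ) → (ℝ → ℝ) → (ℝ → ℝ)) (G : ℕ → (ℝ → ℝ)) : ℕ → (ℝ → ℝ)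
  | 0 => G 0
  | n + 1 => τ (oplusPartial τ G n) (G (n + 1))

/-- A simple non-negative function: finite values on pairwise disjoint measurable sets. -/
structure SimpleFn (S : Set (Set Ω)) where
  n : ℕ
  c : Fin n → ℝ
  A : Fin n → Set Ω
  hc : ∀ i, 0 ≤ c i
  hA : ∀ i, A i ∈ S
  hdisj : Pairwise (Function.onFun Disjoint A)

def SimpleFn.toFun {Ω : Type*} {S : Set (Set Ω)} (f : SimpleFn S) : Ω → ℝ :=
  fun t => ∑ i, (f.A i).indicator (fun _ => f.c i) t

/-- The γ-integral of a simple function on `E`: `⊕ᵢ xᵢ ⊙ γ_{E∩Eᵢ}`. -/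
def SimpleFn.integral {Ω : Type*} {S : Set (Set Ω)} (f : SimpleFn S)
    (τ : (ℝ → ℝ) → (ℝ → ℝ) → (ℝ → ℝ)) (γ : Set Ω → (ℝ → ℝ)) (E : Set Ω) : ℝ → ℝ :=
  oplus τ (fun i => smulDDF (f.c i) (γ (E ∩ f.A i)))

/-- Left-continuous regularization `𝔊(x) = sup_{x' < x} G(x')`. -/
def lcReg (G : ℝ → ℝ) : ℝ → ℝ := fun x => sSup (G '' Set.Iio x)

/-- `𝔣 ∈ 𝒮_{f,E}` : simple functions below `f` on `E`. -/
def SimpleFn.belowOn {Ω : Type*} {S : Set (Set Ω)} (𝔣 : SimpleFn S)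
    (f : Ω → ENNReal) (E : Set Ω) : Prop :=
  ∀ t ∈ E, ENNReal.ofReal (𝔣.toFun t) ≤ f t

/-- `f` is γ-integrable on `E`: the integrals of simple functions below `f`
are bounded from below by some distance distribution function. -/
def Integrable' {Ω : Type*} {S : Set (Set Ω)}
    (τ : (ℝ → ℝ) → (ℝ → ℝ) → (ℝ → ℝ)) (γ : Set Ω → (ℝ → ℝ))
    (f : Ω → ENNReal) (E : Set Ω) : Prop :=
  ∃ H : ℝ → ℝ, IsDDF H ∧ ∀ 𝔣 : SimpleFn S, 𝔣.belowOn f E → H ≤ 𝔣.integral τ γ E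

/-- The γ-integral `∫_E f dγ` : the infimum in (Δ⁺, ≤) of integrals of simple
functions below `f` on `E` (left-continuous regularization of the pointwise infimum). -/
def probIntegral {Ω : Type*} (S : Set (Set Ω))
    (τ : (ℝ → ℝ) → (ℝ → ℝ) → (ℝ → ℝ)) (γ : Set Ω → (ℝ → ℝ))
    (f : Ω → ENNReal) (E : Set Ω) : ℝ → ℝ :=
  lcReg (fun x => sInf {y | ∃ 𝔣 : SimpleFn S, 𝔣.belowOn f E ∧ 𝔣.integral τ γ E x = y})

open Classical in
/-- The Lebesgue–Stieltjes measure of a monotone function (junk value otherwise). -/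
def lsMeasure (H : ℝ → ℝ) : Measure ℝ :=
  if h : Monotone H then h.stieltjesFunction.measure else 0

/-- Convolution `(G * H)(x) = ∫₀ˣ G(x−t) dH(t)` (Lebesgue–Stieltjes). -/
def conv (G H : ℝ → ℝ) : ℝ → ℝ := fun x =>
  if 0 < x then ∫ t in Set.Icc (0:ℝ) x, G (x - t) ∂(lsMeasure H) else 0

/-- `τ_{L,M}(G,H)(x) = sup_{L(u,v)=x} min(G(u),H(v))`. -/
def tauLM (L : ℝ → ℝ → ℝ) (G H : ℝ → ℝ) : ℝ → ℝ := fun x =>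
  sSup {t | ∃ u v : ℝ, 0 ≤ u ∧ 0 ≤ v ∧ L u v = x ∧ t = min (G u) (H v)}

/-- Pseudo-addition on `[0,∞)`: commutative, associative, jointly strictly
increasing, continuous, with neutral element 0. -/
def IsPseudoAddition (L : ℝ → ℝ → ℝ) : Prop :=
  (∀ u v, 0 ≤ u → 0 ≤ v → L u v = L v u) ∧
  (∀ u v w, 0 ≤ u → 0 ≤ v → 0 ≤ w → L (L u v) w = L u (L v w)) ∧
  (∀ u₁ u₂ v₁ v₂, 0 ≤ u₁ → 0 ≤ v₁ → u₁ < u₂ → v₁ < v₂ → L u₁ v₁ < L u₂ v₂) ∧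
  Continuous (fun p : ℝ × ℝ => L p.1 p.2) ∧
  (∀ u, 0 ≤ u → L 0 u = u ∧ L u 0 = u)

/-- γ is a τ-decomposable measure on the ring S. -/
def IsDecomposable {Ω : Type*} (S : Set (Set Ω))
    (τ : (ℝ → ℝ) → (ℝ → ℝ) → (ℝ → ℝ)) (γ : Set Ω → (ℝ → ℝ)) : Prop :=
  γ ∅ = eps0 ∧ ∀ E F : Set Ω, E ∈ S → F ∈ S → Disjoint E F → γ (E ∪ F) = τ (γ E) (γ F)

/-- γ is continuous from below: `γ_{E_n} → γ_E` weakly (in the Sibley metric)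
whenever `E_n ↗ E`. -/
def ContinuousFromBelow {Ω : Type*} (S : Set (Set Ω)) (γ : Set Ω → (ℝ → ℝ)) : Prop :=
  ∀ E : ℕ → Set Ω, (∀ n, E n ∈ S) → Monotone E → (⋃ n, E n) ∈ S →
    Tendsto (fun n => dS (γ (E n)) (γ (⋃ n, E n))) atTop (nhds 0)

/-- Sequential continuity of a triangle function w.r.t. the Sibley metric. -/
def IsContinuousTriangle (τ : (ℝ → ℝ) → (ℝ → ℝ) → (ℝ → ℝ)) : Prop :=
  ∀ (G H : ℝ → ℝ) (Gn Hn : ℕ → (ℝ → ℝ)), IsDDF G → IsDDF H → (∀ n, IsDDF (Gn n)) →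
    (∀ n, IsDDF (Hn n)) →
    Tendsto (fun n => dS (Gn n) G) atTop (nhds 0) →
    Tendsto (fun n => dS (Hn n) H) atTop (nhds 0) →
    Tendsto (fun n => dS (τ (Gn n) (Hn n)) (τ G H)) atTop (nhds 0)


/-- γ with γ_∅ = ε₀ is a τ-decomposable measure iff
τ(γ_{E∪F}, γ_{E∩F}) = τ(γ_E, γ_F) for all E, F in the ring. -/
theorem stmt4 {Ω : Type*} (S : Set (Set Ω)) (hS : MeasureTheory.IsSetRing S)
    (τ : (ℝ → ℝ) → (ℝ → ℝ) → (ℝ → ℝ)) (hτ : IsTriangleFn τ)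
    (γ : Set Ω → (ℝ → ℝ)) (hmem : ∀ E ∈ S, IsDDF (γ E)) (h0 : γ ∅ = eps0) :
    (∀ E F : Set Ω, E ∈ S → F ∈ S → Disjoint E F → γ (E ∪ F) = τ (γ E) (γ F)) ↔
    (∀ E F : Set Ω, E ∈ S → F ∈ S → τ (γ (E ∪ F)) (γ (E ∩ F)) = τ (γ E) (γ F)) := by
  obtain ⟨_, hcomm, hassoc, _, hid⟩ := hτ
  constructor
  · intro hadd E F hE hF
    have hFE : F \ E ∈ S := hS.sdiff_mem hF hE
    have hEF : E ∩ F ∈ S := hS.inter_mem hE hF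
    have h1 : E ∪ F = E ∪ (F \ E) := (Set.union_diff_self ..).symm
    have h2 : (F \ E) ∪ (E ∩ F) = F := by
      rw [Set.inter_comm]; exact Set.diff_union_inter F E
    calc τ (γ (E ∪ F)) (γ (E ∩ F))
        = τ (τ (γ E) (γ (F \ E))) (γ (E ∩ F)) := by
          rw [h1, hadd E (F \ E) hE hFE Set.disjoint_sdiff_right]
      _ = τ (γ E) (τ (γ (F \ E)) (γ (E ∩ F))) := hassoc ..
      _ = τ (γ E) (γ F) := by
          rw [← hadd (F \ E) (E ∩ F) hFE hEF
            (Set.disjoint_sdiff_left.mono_right Set.inter_subset_left), h2]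
  · intro h E F hE hF hdisj
    have := h E F hE hF
    rw [Set.disjoint_iff_inter_eq_empty.mp hdisj, h0,
      hid _ (hmem _ (hS.union_mem hE hF))] at this
    exact this

end
end

section
/- Let τ be a triangle function and γ a σ-additive τ-decomposable measure on a σ-ring Σ (limits taken in the Sibley metric d_S on Δ⁺). If E_n ↗ E (i.e., E_n ⊆ E_{n+1} and ∪E_n = E), then γ_{E_n} converges weakly to γ_E. -/
open MeasureTheory Filter Set Topology

noncomputable section

/-- a σ-additive τ-decomposable measure on a σ-ring is continuous
from below: if E_n ↗ E then γ_{E_n} → γ_E weakly (in the Sibley metric d_S). -/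
theorem stmt7 {Ω : Type*} (S : Set (Set Ω))
    (hempty : (∅ : Set Ω) ∈ S)
    (hdiff : ∀ A B : Set Ω, A ∈ S → B ∈ S → A \ B ∈ S)
    (hiUnion : ∀ f : ℕ → Set Ω, (∀ n, f n ∈ S) → (⋃ n, f n) ∈ S)
    (τ : (ℝ → ℝ) → (ℝ → ℝ) → (ℝ → ℝ)) (hτ : IsTriangleFn τ)
    (γ : Set Ω → (ℝ → ℝ)) (hmem : ∀ E ∈ S, IsDDF (γ E))
    (hγ : IsDecomposable S τ γ)
    (hσ : ∀ E : ℕ → Set Ω, (∀ n, E n ∈ S) → Pairwise (Function.onFun Disjoint E) →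
      Tendsto (fun n => dS (oplusPartial τ (fun k => γ (E k)) n) (γ (⋃ k, E k)))
        atTop (nhds 0))
    (E : ℕ → Set Ω) (hE : ∀ n, E n ∈ S) (hmono : Monotone E) :
    Tendsto (fun n => dS (γ (E n)) (γ (⋃ n, E n))) atTop (nhds 0) := by
  set D : ℕ → Set Ω := disjointed E with hD
  have hDsucc : ∀ n, D (n + 1) = E (n + 1) \ E n := by
    intro n
    simp [hD, disjointed_add_one, hmono.partialSups_eq]
  have hDmem : ∀ n, D n ∈ S := by
    intro n
    cases n with
    | zero => simpa [hD, disjointed_zero] using hE 0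
    | succ k => rw [hDsucc]; exact hdiff _ _ (hE (k + 1)) (hE k)
  have hDdisj : Pairwise (Function.onFun Disjoint D) := disjoint_disjointed E
  have hDUnion : (⋃ n, D n) = ⋃ n, E n := iUnion_disjointed
  have hpartial : ∀ n, oplusPartial τ (fun k => γ (D k)) n = γ (E n) := by
    intro n
    induction n with
    | zero => simp [oplusPartial, hD, disjointed_zero]
    | succ k ih =>
      have hdis : Disjoint (E k) (E (k + 1) \ E k) := disjoint_sdiff_right
      have hU : E k ∪ (E (k + 1) \ E k) = E (k + 1) :=
        Set.union_diff_cancel (hmono (Nat.le_succ k))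
      calc oplusPartial τ (fun k => γ (D k)) (k + 1)
          = τ (γ (E k)) (γ (E (k + 1) \ E k)) := by
            rw [oplusPartial, ih, hDsucc]
        _ = γ (E k ∪ (E (k + 1) \ E k)) :=
            (hγ.2 _ _ (hE k) (hdiff _ _ (hE (k + 1)) (hE k)) hdis).symm
        _ = γ (E (k + 1)) := by rw [hU]
  have := hσ D hDmem hDdisj
  rw [hDUnion] at this
  simpa only [hpartial] using this

end
end

section
/- If μ: Σ → [0,∞) satisfies μ(E∪F) = max(μ(E), μ(F)) for disjoint E, F and μ(∅)=0, then γ_E := ε_{μ(E)} is a Π_⊤-decomposable measure for every left-continuous t-norm ⊤, where Π_⊤(G,H)(t) = ⊤(G(t), H(t)). -/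
open MeasureTheory Filter Set Topology

noncomputable section

/-- if μ is max-decomposable then γ_E := ε_{μ(E)} is
Π_⊤-decomposable for every left-continuous t-norm ⊤. -/
theorem stmt11 {Ω : Type*} (S : Set (Set Ω)) (hS : MeasureTheory.IsSetRing S)
    (T : ℝ → ℝ → ℝ)
    (hcomm : ∀ x y, x ∈ Set.Icc (0:ℝ) 1 → y ∈ Set.Icc (0:ℝ) 1 → T x y = T y x)
    (hassoc : ∀ x y z, x ∈ Set.Icc (0:ℝ) 1 → y ∈ Set.Icc (0:ℝ) 1 → z ∈ Set.Icc (0:ℝ) 1 →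
      T (T x y) z = T x (T y z))
    (hmono : ∀ x₁ x₂ y, x₁ ∈ Set.Icc (0:ℝ) 1 → x₂ ∈ Set.Icc (0:ℝ) 1 → y ∈ Set.Icc (0:ℝ) 1 →
      x₁ ≤ x₂ → T x₁ y ≤ T x₂ y)
    (hmem : ∀ x y, x ∈ Set.Icc (0:ℝ) 1 → y ∈ Set.Icc (0:ℝ) 1 → T x y ∈ Set.Icc (0:ℝ) 1)
    (hone : ∀ x, x ∈ Set.Icc (0:ℝ) 1 → T 1 x = x)
    (hlc : ∀ y x : ℝ, ContinuousWithinAt (fun u => T u y) (Set.Iio x) x)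
    (μ : Set Ω → ℝ) (hμ0 : μ ∅ = 0) (hμnn : ∀ E ∈ S, 0 ≤ μ E)
    (hmax : ∀ E F : Set Ω, E ∈ S → F ∈ S → Disjoint E F → μ (E ∪ F) = max (μ E) (μ F)) :
    IsDecomposable S (fun G H => fun t => T (G t) (H t)) (fun E => epsAt (μ E)) := by
  have h01 : (0:ℝ) ∈ Set.Icc (0:ℝ) 1 := ⟨le_refl 0, zero_le_one⟩
  have h11 : (1:ℝ) ∈ Set.Icc (0:ℝ) 1 := ⟨zero_le_one, le_refl 1⟩
  have hT10 : T 1 0 = 0 := hone 0 h01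
  have hT01 : T 0 1 = 0 := by rw [hcomm 0 1 h01 h11]; exact hT10
  have hT00 : T 0 0 = 0 := by
    have hle := hmono 0 0 0 h01 h01 h01 le_rfl
    have := (hmem 0 0 h01 h01).1
    have h2 : T 0 0 ≤ T 0 1 := by
      rw [hcomm 0 0 h01 h01, hcomm 0 1 h01 h11]
      exact hmono 0 1 0 h01 h11 h01 zero_le_one
    linarith [hT01]
  have hT11 : T 1 1 = 1 := hone 1 h11
  constructor
  · funext x
    simp [epsAt, eps0, hμ0]
  · intro E F hE hF hEF
    funext t
    simp only [epsAt, hmax E F hE hF hEF]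
    by_cases h1 : μ E < t <;> by_cases h2 : μ F < t
    · rw [if_pos (max_lt h1 h2)]; simp [h1, h2, hT11]
    · rw [if_neg (by simp [max_lt_iff, h2])]; simp [h1, h2, hT10]
    · rw [if_neg (by simp [max_lt_iff, h1])]; simp [h1, h2, hT01]
    · rw [if_neg (by simp [max_lt_iff, h1])]; simp [h1, h2, hT00]

end
end

section
/- Let τ be a distributive triangle function and γ a τ-decomposable measure on a ring Σ. The integral of a simple function is well-defined: if f = Σᵢ αᵢ χ_{Eᵢ} = Σⱼ βⱼ χ_{Fⱼ} are two representations with pairwise disjoint measurable sets, then ⊕ᵢ αᵢ ⊙ γ_{E∩Eᵢ} = ⊕ⱼ βⱼ ⊙ γ_{E∩Fⱼ} for any E ∈ Σ. -/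
open MeasureTheory Filter Set Topology

noncomputable section

section AuxStmt12

lemma cwa_of_eventually {F : ℝ → ℝ} {x : ℝ} (h : ∀ᶠ y in 𝓝[Set.Iio x] x, F y = F x) :
    ContinuousWithinAt F (Set.Iio x) x := by
  apply Filter.Tendsto.congr' _ tendsto_const_nhds
  filter_upwards [h] with y hy
  exact hy.symm

lemma eps0_ddf : IsDDF eps0 := by
  refine ⟨?_, ?_, ?_, ?_, ?_⟩
  · intro x y hxy
    simp only [eps0]
    split_ifs with h1 h2 <;> norm_num
    exact h2 (h1.trans_le hxy)
  · intro x
    rcases le_or_gt x 0 with hx | hx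
    · apply cwa_of_eventually
      filter_upwards [self_mem_nhdsWithin] with y (hy : y < x)
      simp only [eps0, if_neg (not_lt.2 (hy.le.trans hx)), if_neg (not_lt.2 hx)]
    · apply cwa_of_eventually
      have : Set.Ioi (0:ℝ) ∈ 𝓝[Set.Iio x] x := mem_nhdsWithin_of_mem_nhds (Ioi_mem_nhds hx)
      filter_upwards [this] with y (hy : 0 < y)
      simp only [eps0, if_pos hy, if_pos hx]
  · intro x hx; simp [eps0, not_lt.2 hx]
  · intro x; simp only [eps0]; split_ifs <;> norm_num
  · apply Filter.Tendsto.congr' _ tendsto_const_nhds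
    filter_upwards [eventually_gt_atTop 0] with y hy
    simp [eps0, hy]

lemma smul_eps0' {c : ℝ} (hc : 0 ≤ c) : smulDDF c eps0 = eps0 := by
  rcases eq_or_lt_of_le hc with h | h
  · funext x; simp [smulDDF, ← h]
  · funext x
    simp only [smulDDF, if_neg h.ne', eps0]
    congr 1
    simp [div_pos_iff, h, not_lt.2 h.le]

lemma smul_zero'' (G : ℝ → ℝ) : smulDDF 0 G = eps0 := by
  funext x; simp [smulDDF]

lemma smul_ddf {c : ℝ} (hc : 0 ≤ c) {G : ℝ → ℝ} (hG : IsDDF G) : IsDDF (smulDDF c G) := by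
  rcases eq_or_lt_of_le hc with h | h
  · rw [← h, smul_zero'']; exact eps0_ddf
  · have he : smulDDF c G = fun x => G (x / c) := by
      funext x; simp [smulDDF, h.ne']
    rw [he]
    refine ⟨?_, ?_, ?_, ?_, ?_⟩
    · intro a b hab
      exact hG.1 (by gcongr)
    · intro x
      refine ContinuousWithinAt.comp (hG.2.1 (x / c))
        ((continuous_id.div_const c).continuousWithinAt) ?_
      intro y (hy : y < x)
      exact div_lt_div_of_pos_right hy h
    · intro x hx
      exact hG.2.2.1 _ (div_nonpos_iff.2 (Or.inr ⟨hx, h.le⟩))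
    · intro x; exact hG.2.2.2.1 _
    · exact hG.2.2.2.2.comp (tendsto_id.atTop_div_const h)

variable {τ : (ℝ → ℝ) → (ℝ → ℝ) → (ℝ → ℝ)}

lemma tau_eps0_eps0 (hτ : IsTriangleFn τ) : τ eps0 eps0 = eps0 :=
  hτ.2.2.2.2 eps0 eps0_ddf

lemma oplus_ddf (hτ : IsTriangleFn τ) : ∀ {n} (G : Fin n → ℝ → ℝ),
    (∀ i, IsDDF (G i)) → IsDDF (oplus τ G) := by
  intro n
  induction n with
  | zero => intro G _; exact eps0_ddf
  | succ n ih =>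
    intro G h
    exact hτ.1 _ _ (h 0) (ih _ fun i => h i.succ)

lemma smul_oplus (hd : IsDistributive τ) {c : ℝ} (hc : 0 ≤ c) :
    ∀ {n} (G : Fin n → ℝ → ℝ),
      smulDDF c (oplus τ G) = oplus τ (fun i => smulDDF c (G i)) := by
  intro n
  induction n with
  | zero => intro G; exact smul_eps0' hc
  | succ n ih =>
    intro G
    show smulDDF c (τ (G 0) (oplus τ fun i => G i.succ)) = _
    rw [hd c hc, ih]
    rfl

lemma oplus_eq_fold [Std.Commutative τ] [Std.Associative τ] :
    ∀ {n} (G : Fin n → ℝ → ℝ),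
      oplus τ G = (Finset.univ.val.map G).fold τ eps0 := by
  intro n
  induction n with
  | zero => intro G; simp [oplus]
  | succ n ih =>
    intro G
    rw [show oplus τ G = τ (G 0) (oplus τ fun i => G i.succ) from rfl, ih]
    rw [Fin.univ_val_map, Fin.univ_val_map, List.ofFn_succ]
    simp only [← Multiset.cons_coe, Multiset.fold_cons_left]

lemma fold_replicate [Std.Commutative τ] [Std.Associative τ] (he : τ eps0 eps0 = eps0) :
    ∀ k, (Multiset.replicate k eps0).fold τ eps0 = eps0 := by
  intro k
  induction k with
  | zero => rfl
  | succ k ih => rw [Multiset.replicate_succ, Multiset.fold_cons_left, ih, he]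

lemma fold_of_fold [Std.Commutative τ] [Std.Associative τ] (he : τ eps0 eps0 = eps0)
    {ι : Type*} (s : Multiset ι) (t : ι → Multiset (ℝ → ℝ)) :
    (s.map fun i => (t i).fold τ eps0).fold τ eps0 = (s.bind t).fold τ eps0 := by
  have := Multiset.fold_bind (op := τ) s t (fun _ => eps0) eps0
  rw [Multiset.map_const', fold_replicate he] at this
  exact this.symm

lemma gamma_iUnion {Ω : Type*} {S : Set (Set Ω)} (hS : MeasureTheory.IsSetRing S)
    {γ : Set Ω → ℝ → ℝ} (hγ : IsDecomposable S τ γ) :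
    ∀ {n} (D : Fin n → Set Ω), (∀ i, D i ∈ S) → Pairwise (Function.onFun Disjoint D) →
      (⋃ i, D i) ∈ S ∧ γ (⋃ i, D i) = oplus τ (fun i => γ (D i)) := by
  intro n
  induction n with
  | zero =>
    intro D _ _
    rw [Set.iUnion_of_empty]
    exact ⟨hS.empty_mem, hγ.1⟩
  | succ n ih =>
    intro D hD hdisj
    have hsplit : (⋃ i, D i) = D 0 ∪ ⋃ i : Fin n, D i.succ := by
      ext t
      simp [Set.mem_iUnion, Fin.exists_fin_succ]
    have hpd : Pairwise (Function.onFun Disjoint fun i : Fin n => D i.succ) := by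
      intro i j hij
      exact hdisj (fun h => hij (Fin.succ_injective n h))
    obtain ⟨hmemU, heq⟩ := ih (fun i => D i.succ) (fun i => hD _) hpd
    have hdisj0 : Disjoint (D 0) (⋃ i : Fin n, D i.succ) :=
      Set.disjoint_iUnion_right.2 fun i => hdisj (Fin.succ_ne_zero i).symm
    refine ⟨?_, ?_⟩
    · rw [hsplit]; exact hS.union_mem (hD 0) hmemU
    · rw [hsplit, hγ.2 _ _ (hD 0) hmemU hdisj0, heq]
      rfl

lemma toFun_eq {Ω : Type*} {S : Set (Set Ω)} (f : SimpleFn S) {t : Ω} {i : Fin f.n}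
    (ht : t ∈ f.A i) : f.toFun t = f.c i := by
  unfold SimpleFn.toFun
  rw [Finset.sum_eq_single i]
  · exact Set.indicator_of_mem ht _
  · intro k _ hk
    exact Set.indicator_of_notMem (fun htk => Set.disjoint_left.mp (f.hdisj hk) htk ht) _
  · simp

lemma toFun_zero {Ω : Type*} {S : Set (Set Ω)} (f : SimpleFn S) {t : Ω}
    (ht : ∀ i, t ∉ f.A i) : f.toFun t = 0 := by
  unfold SimpleFn.toFun
  exact Finset.sum_eq_zero fun i _ => Set.indicator_of_notMem (ht i) _

lemma row_lemma {Ω : Type*} {S : Set (Set Ω)} (hS : MeasureTheory.IsSetRing S)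
    (hτ : IsTriangleFn τ) (hd : IsDistributive τ)
    {γ : Set Ω → ℝ → ℝ} (hmem : ∀ E ∈ S, IsDDF (γ E)) (hγ : IsDecomposable S τ γ)
    (f g : SimpleFn S) (hfg : f.toFun = g.toFun) {E : Set Ω} (hE : E ∈ S) (i : Fin f.n) :
    smulDDF (f.c i) (γ (E ∩ f.A i)) =
      oplus τ (fun j => smulDDF (f.c i) (γ (E ∩ f.A i ∩ g.A j))) := by
  set P : Fin g.n → Set Ω := fun j => E ∩ f.A i ∩ g.A j with hP
  have hpd : Pairwise (Function.onFun Disjoint P) := fun j k hjk =>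
    ((g.hdisj hjk).mono Set.inter_subset_right Set.inter_subset_right)
  have hmemP : ∀ j, P j ∈ S := fun j => hS.inter_mem (hS.inter_mem hE (f.hA i)) (g.hA j)
  obtain ⟨hU, hUeq⟩ := gamma_iUnion hS hγ P hmemP hpd
  have hBU : (⋃ j, g.A j) ∈ S := (gamma_iUnion hS hγ g.A g.hA g.hdisj).1
  set R : Set Ω := (E ∩ f.A i) \ ⋃ j, g.A j with hR
  have hmemR : R ∈ S := hS.sdiff_mem (hS.inter_mem hE (f.hA i)) hBU
  have hsplit : E ∩ f.A i = (⋃ j, P j) ∪ R := by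
    ext t
    simp only [hP, hR, Set.mem_union, Set.mem_iUnion, Set.mem_inter_iff, Set.mem_diff]
    constructor
    · rintro ⟨htE, htA⟩
      by_cases h : ∃ j, t ∈ g.A j
      · obtain ⟨j, hj⟩ := h
        exact Or.inl ⟨j, ⟨htE, htA⟩, hj⟩
      · exact Or.inr ⟨⟨htE, htA⟩, h⟩
    · rintro (⟨j, ⟨h1, h2⟩, _⟩ | ⟨⟨h1, h2⟩, _⟩) <;> exact ⟨h1, h2⟩
  have hdisjUR : Disjoint (⋃ j, P j) R := by
    rw [Set.disjoint_left]
    rintro t ht htR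
    obtain ⟨j, htj⟩ := Set.mem_iUnion.1 ht
    exact htR.2 (Set.mem_iUnion.2 ⟨j, htj.2⟩)
  have hsmulR : smulDDF (f.c i) (γ R) = eps0 := by
    rcases R.eq_empty_or_nonempty with h | ⟨t, htR⟩
    · rw [h, hγ.1, smul_eps0' (f.hc i)]
    · have h1 : f.toFun t = f.c i := toFun_eq f htR.1.2
      have h2 : g.toFun t = 0 :=
        toFun_zero g (fun j htj => htR.2 (Set.mem_iUnion.2 ⟨j, htj⟩))
      have hc0 : f.c i = 0 := by rw [← h1, hfg, h2]
      rw [hc0, smul_zero'']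
  calc smulDDF (f.c i) (γ (E ∩ f.A i))
      = smulDDF (f.c i) (τ (γ (⋃ j, P j)) (γ R)) := by
        rw [hsplit, hγ.2 _ _ hU hmemR hdisjUR]
    _ = τ (smulDDF (f.c i) (γ (⋃ j, P j))) (smulDDF (f.c i) (γ R)) := by
        rw [hd (f.c i) (f.hc i)]
    _ = τ (smulDDF (f.c i) (γ (⋃ j, P j))) eps0 := by rw [hsmulR]
    _ = smulDDF (f.c i) (γ (⋃ j, P j)) :=
        hτ.2.2.2.2 _ (smul_ddf (f.hc i) (hmem _ hU))
    _ = smulDDF (f.c i) (oplus τ (fun j => γ (P j))) := by rw [hUeq]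
    _ = oplus τ (fun j => smulDDF (f.c i) (γ (P j))) := smul_oplus hd (f.hc i) _

end AuxStmt12

/-- the γ-integral of a simple function does not depend on its
representation. -/
theorem stmt12 {Ω : Type*} (S : Set (Set Ω)) (hS : MeasureTheory.IsSetRing S)
    (τ : (ℝ → ℝ) → (ℝ → ℝ) → (ℝ → ℝ)) (hτ : IsTriangleFn τ) (hd : IsDistributive τ)
    (γ : Set Ω → (ℝ → ℝ)) (hmem : ∀ E ∈ S, IsDDF (γ E)) (hγ : IsDecomposable S τ γ)
    (f g : SimpleFn S) (hfg : f.toFun = g.toFun) (E : Set Ω) (hE : E ∈ S) :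
    f.integral τ γ E = g.integral τ γ E := by
  haveI : Std.Commutative τ := ⟨hτ.2.1⟩
  haveI : Std.Associative τ := ⟨hτ.2.2.1⟩
  have key : ∀ (i : Fin f.n) (j : Fin g.n),
      smulDDF (f.c i) (γ (E ∩ f.A i ∩ g.A j)) = smulDDF (g.c j) (γ (E ∩ f.A i ∩ g.A j)) := by
    intro i j
    rcases (E ∩ f.A i ∩ g.A j).eq_empty_or_nonempty with h | ⟨t, ht⟩
    · rw [h, hγ.1, smul_eps0' (f.hc i), smul_eps0' (g.hc j)]
    · have h1 : f.toFun t = f.c i := toFun_eq f ht.1.2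
      have h2 : g.toFun t = g.c j := toFun_eq g ht.2
      rw [show f.c i = g.c j from by rw [← h1, hfg, h2]]
  unfold SimpleFn.integral
  have hrowf : (fun i => smulDDF (f.c i) (γ (E ∩ f.A i)))
      = fun i => oplus τ (fun j => smulDDF (f.c i) (γ (E ∩ f.A i ∩ g.A j))) :=
    funext fun i => row_lemma hS hτ hd hmem hγ f g hfg hE i
  have hrowg : (fun j => smulDDF (g.c j) (γ (E ∩ g.A j)))
      = fun j => oplus τ (fun i => smulDDF (g.c j) (γ (E ∩ f.A i ∩ g.A j))) := by
    funext j
    rw [row_lemma hS hτ hd hmem hγ g f hfg.symm hE j]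
    have : (fun i => smulDDF (g.c j) (γ (E ∩ g.A j ∩ f.A i)))
        = fun i => smulDDF (g.c j) (γ (E ∩ f.A i ∩ g.A j)) := by
      funext i
      rw [Set.inter_right_comm]
    rw [this]
  rw [hrowf, hrowg]
  rw [oplus_eq_fold (τ := τ), oplus_eq_fold (τ := τ)]
  simp only [oplus_eq_fold (τ := τ)]
  rw [fold_of_fold (tau_eps0_eps0 hτ), fold_of_fold (tau_eps0_eps0 hτ)]
  congr 1
  rw [Multiset.bind_map_comm]
  congr 1
  funext j
  exact Multiset.map_congr rfl fun i _ => key i j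


end
end
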